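/- Let d ≥ 1 and let S₁, …, S_m be Hermitian complex d×d matrices with S_i * S_i = 1 for all i and S_i * S_j = -(S_j * S_i) for all i ≠ j (a pairwise anticommuting family of Hermitian involutions, i.e., a realization of the complete graph K_m). Then for every unit vector ψ ∈ ℂ^d, ∑_{i=1}^m (ψᴴ S_i ψ)² ≤ 1. -/

import Mathlib

open Matrix

lemma dotProduct_sum' {n : Type*} [Fintype n] {ι : Type*} (t : Finset ι) (u : n → ℂ)
    (w : ι → n → ℂ) : u ⬝ᵥ (∑ i ∈ t, w i) = ∑ i ∈ t, u ⬝ᵥ w i := by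
  simp only [dotProduct, Finset.sum_apply, Finset.mul_sum]
  exact Finset.sum_comm

set_option maxHeartbeats 1000000 in
/-- For a pairwise anticommuting family of Hermitian involutions (a realization of the complete
graph), the sum of squared expectations at any unit vector is at most 1. -/
theorem stmt_14 (d m : ℕ) (hd : 1 ≤ d) (S : Fin m → Matrix (Fin d) (Fin d) ℂ)
    (hherm : ∀ i, (S i).IsHermitian) (hsq : ∀ i, S i * S i = 1)
    (hanti : ∀ i j, i ≠ j → S i * S j = -(S j * S i)) :
    ∀ ψ : Fin d → ℂ, star ψ ⬝ᵥ ψ = 1 →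
      ∑ i, ((star ψ ⬝ᵥ ((S i) *ᵥ ψ)).re) ^ 2 ≤ 1 := by
  intro ψ hψ
  set c : Fin m → ℝ := fun i => (star ψ ⬝ᵥ (S i *ᵥ ψ)).re with hc
  set s : ℝ := ∑ i, c i ^ 2 with hs
  have hs0 : 0 ≤ s := Finset.sum_nonneg fun i _ => sq_nonneg _
  set M : Matrix (Fin d) (Fin d) ℂ := ∑ i, (c i : ℂ) • S i with hM
  set a : Fin m → Fin m → Matrix (Fin d) (Fin d) ℂ :=
    fun i j => ((c i : ℂ) * (c j : ℂ)) • (S i * S j) with ha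
  -- M is Hermitian
  have hMH : Mᴴ = M := by
    rw [hM, conjTranspose_sum]
    refine Finset.sum_congr rfl fun i _ => ?_
    rw [conjTranspose_smul, (hherm i).eq]
    simp
  -- M * M = s • 1
  have expand : M * M = ∑ i, ∑ j, a i j := by
    rw [hM, Finset.sum_mul_sum]
    refine Finset.sum_congr rfl fun i _ => Finset.sum_congr rfl fun j _ => ?_
    rw [ha, smul_mul_assoc, mul_smul_comm, smul_smul]
  have key : ∀ i j, a i j + a j i
      = if i = j then ((2 : ℂ) * ((c i : ℂ))^2) • (1 : Matrix (Fin d) (Fin d) ℂ) else 0 := by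
    intro i j
    by_cases h : i = j
    · subst h
      rw [if_pos rfl, ha]
      simp only [hsq i, ← add_smul]
      ring_nf
    · rw [if_neg h, ha]
      simp only [hanti i j h, smul_neg, mul_comm ((c j : ℂ)) ((c i : ℂ))]
      exact neg_add_cancel _
  have hM2 : M * M = (s : ℂ) • (1 : Matrix (Fin d) (Fin d) ℂ) := by
    have h2 : M * M + M * M = ((2 : ℂ) * (s : ℂ)) • (1 : Matrix (Fin d) (Fin d) ℂ) := by
      calc M * M + M * M
          = (∑ i, ∑ j, a i j) + (∑ i, ∑ j, a j i) :=
            congrArg₂ (· + ·) expand (expand.trans Finset.sum_comm)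
        _ = ∑ i, ∑ j, (a i j + a j i) := by
            rw [← Finset.sum_add_distrib]
            exact Finset.sum_congr rfl fun i _ => Finset.sum_add_distrib.symm
        _ = ∑ i, ((2 : ℂ) * ((c i : ℂ))^2) • (1 : Matrix (Fin d) (Fin d) ℂ) := by
            refine Finset.sum_congr rfl fun i _ => ?_
            rw [Finset.sum_congr rfl fun j _ => key i j]
            simp
        _ = ((2 : ℂ) * (s : ℂ)) • (1 : Matrix (Fin d) (Fin d) ℂ) := by
            rw [← Finset.sum_smul]
            congr 1
            rw [hs]
            push_cast
            rw [Finset.mul_sum]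
    have h3 : (2 : ℂ) • (M * M) = (2 : ℂ) • ((s : ℂ) • (1 : Matrix (Fin d) (Fin d) ℂ)) := by
      rw [two_smul, h2, smul_smul]
    exact smul_right_injective _ (two_ne_zero) h3
  -- (∑ i, cᵢ • Sᵢ) *ᵥ ψ = ∑ i, (cᵢ • Sᵢ) *ᵥ ψ
  have hsumv : M *ᵥ ψ = ∑ i, ((c i : ℂ) • S i) *ᵥ ψ := by
    ext k
    simp only [hM, mulVec, dotProduct, Matrix.sum_apply, Finset.sum_apply, Finset.sum_mul]
    exact Finset.sum_comm
  -- expectation of M is s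
  have hexp : (star ψ ⬝ᵥ (M *ᵥ ψ)).re = s := by
    rw [hsumv, dotProduct_sum']
    rw [Complex.re_sum]
    refine Finset.sum_congr rfl fun i _ => ?_
    rw [smul_mulVec, dotProduct_smul, smul_eq_mul, Complex.re_ofReal_mul, sq]
  -- norm squared of M ψ is s
  have hnormsq : (star (M *ᵥ ψ) ⬝ᵥ (M *ᵥ ψ)) = (s : ℂ) := by
    rw [star_mulVec, ← dotProduct_mulVec, mulVec_mulVec, hMH, hM2]
    rw [smul_mulVec, one_mulVec, dotProduct_smul, hψ, smul_eq_mul, mul_one]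
  -- Cauchy-Schwarz
  set x : EuclideanSpace ℂ (Fin d) := (WithLp.equiv 2 _).symm ψ with hx
  set y : EuclideanSpace ℂ (Fin d) := (WithLp.equiv 2 _).symm (M *ᵥ ψ) with hy
  have hinner : inner ℂ x y = star ψ ⬝ᵥ (M *ᵥ ψ) := (EuclideanSpace.inner_toLp_toLp ψ (M *ᵥ ψ)).trans (dotProduct_comm _ _)
  have hxnorm : ‖x‖ = 1 := by
    have h1 : RCLike.re (inner ℂ x x : ℂ) = ‖x‖ ^ 2 := inner_self_eq_norm_sq x
    have h2 : (inner ℂ x x : ℂ) = star ψ ⬝ᵥ ψ := (EuclideanSpace.inner_toLp_toLp ψ ψ).trans (dotProduct_comm _ _)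
    rw [hψ] at h2
    rw [h2] at h1
    norm_num at h1
    nlinarith [norm_nonneg x]
  have hynorm : ‖y‖ ^ 2 = s := by
    have h1 : RCLike.re (inner ℂ y y : ℂ) = ‖y‖ ^ 2 := inner_self_eq_norm_sq y
    have h2 : (inner ℂ y y : ℂ) = star (M *ᵥ ψ) ⬝ᵥ (M *ᵥ ψ) :=
      (EuclideanSpace.inner_toLp_toLp _ _).trans (dotProduct_comm _ _)
    rw [hnormsq] at h2
    rw [h2] at h1
    simpa using h1.symm
  have hcs : ‖(inner ℂ x y : ℂ)‖ ≤ ‖x‖ * ‖y‖ := norm_inner_le_norm x y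
  have hre : s ≤ ‖(inner ℂ x y : ℂ)‖ := by
    rw [hinner]
    calc s = (star ψ ⬝ᵥ (M *ᵥ ψ)).re := hexp.symm
      _ ≤ ‖star ψ ⬝ᵥ (M *ᵥ ψ)‖ := by exact Complex.re_le_norm _
  rw [hxnorm, one_mul] at hcs
  have hle : s ≤ ‖y‖ := le_trans hre hcs
  nlinarith [norm_nonneg y]
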